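/- Let a, b be m×m symmetric positive definite real matrices with Λ_0 I ≤ a, b ≤ Λ_1 I, and set θ = Λ_0^{-1} m ‖a - b‖. Then |det(b)/det(a) - 1| ≤ θ e^θ. -/

import Mathlib

open Matrix
open scoped RealInnerProductSpace

private lemma psd_smul_aux {m : ℕ} {c : ℝ} {M : Matrix (Fin m) (Fin m) ℝ}
    (hc : 0 ≤ c) (hM : M.PosSemidef) : (c • M).PosSemidef := by
  refine ⟨?_, fun x => ?_⟩
  · show (c • M)ᴴ = c • M
    rw [conjTranspose_smul, hM.1]
    simp
  · exact (hM.smul hc).2 x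

private lemma one_le_det_one_add_aux {m : ℕ} {Q : Matrix (Fin m) (Fin m) ℝ}
    (hQ : Q.PosSemidef) : 1 ≤ (1 + Q).det := by
  have hH := hQ.1
  set U : Matrix (Fin m) (Fin m) ℝ := (hH.eigenvectorUnitary : Matrix (Fin m) (Fin m) ℝ) with hUdef
  have hU : U * star U = 1 := (Matrix.mem_unitaryGroup_iff).mp hH.eigenvectorUnitary.2
  set D : Matrix (Fin m) (Fin m) ℝ :=
    diagonal ((RCLike.ofReal : ℝ → ℝ) ∘ hH.eigenvalues) with hDdef
  have h1 : (1 : Matrix (Fin m) (Fin m) ℝ) + Q = U * (1 + D) * star U := by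
    rw [Matrix.mul_add, Matrix.add_mul, mul_one, hU, hDdef, hUdef, ← Unitary.conjStarAlgAut_apply (S := ℝ), ← hH.spectral_theorem]
  have hUU : U.det * (star U).det = 1 := by rw [← det_mul, hU, det_one]
  have h2 : (1 + Q).det = (1 + D).det := by
    calc (1 + Q).det = U.det * (1 + D).det * (star U).det := by rw [h1, det_mul, det_mul]
      _ = (U.det * (star U).det) * (1 + D).det := by ring
      _ = (1 + D).det := by rw [hUU, one_mul]
  have h3 : (1 : Matrix (Fin m) (Fin m) ℝ) + D = diagonal (fun i => 1 + hH.eigenvalues i) := by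
    rw [hDdef, ← diagonal_one, diagonal_add]
    rfl
  rw [h2, h3, det_diagonal]
  calc (1 : ℝ) = ∏ _i : Fin m, (1 : ℝ) := by simp
    _ ≤ ∏ i, (1 + hH.eigenvalues i) := by
        refine Finset.prod_le_prod (fun i _ => zero_le_one) fun i _ => ?_
        have h4 : 0 ≤ hH.eigenvalues i := hQ.eigenvalues_nonneg i
        linarith

open scoped MatrixOrder in
private lemma det_le_det_aux {m : ℕ} {A B : Matrix (Fin m) (Fin m) ℝ}
    (hA : A.PosDef) (h : (B - A).PosSemidef) : A.det ≤ B.det := by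
  have hAs := hA.posSemidef
  set S := CFC.sqrt A with hSdef
  have hSps : S.PosSemidef := (CFC.sqrt_nonneg A).posSemidef
  have hSmul : S * S = A := CFC.sqrt_mul_sqrt_self A hAs.nonneg
  have hdetS : S.det * S.det = A.det := by rw [← det_mul, hSmul]
  have hdetS0 : IsUnit S.det := by
    have := hA.det_pos
    refine isUnit_iff_ne_zero.mpr fun h0 => ?_
    rw [h0, mul_zero] at hdetS
    exact this.ne hdetS
  have hSS : S * S⁻¹ = 1 := Matrix.mul_nonsing_inv S hdetS0
  have hSS' : S⁻¹ * S = 1 := Matrix.nonsing_inv_mul S hdetS0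
  have hSinvH : (S⁻¹).IsHermitian := hSps.1.inv
  set Q := S⁻¹ * (B - A) * S⁻¹ with hQdef
  have hQ : Q.PosSemidef := by
    have := h.conjTranspose_mul_mul_same S⁻¹
    rwa [hSinvH.eq] at this
  have hB : B = S * (1 + Q) * S := by
    have e1 : S * Q * S = B - A := by
      calc S * (S⁻¹ * (B - A) * S⁻¹) * S
          = (S * S⁻¹) * ((B - A) * (S⁻¹ * S)) := by simp only [Matrix.mul_assoc]
        _ = B - A := by rw [hSS, hSS', mul_one, one_mul]
    calc B = A + (B - A) := by abel
      _ = S * S + S * Q * S := by rw [hSmul, e1]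
      _ = S * (1 + Q) * S := by rw [Matrix.mul_add, Matrix.add_mul, mul_one]
  have hdet : B.det = A.det * (1 + Q).det := by
    rw [hB, det_mul, det_mul, ← hdetS]; ring
  rw [hdet]
  have := one_le_det_one_add_aux hQ
  nlinarith [hA.det_pos]

private lemma norm_psd_aux {m : ℕ} {M : Matrix (Fin m) (Fin m) ℝ} (hM : M.IsHermitian) :
    ((‖Matrix.toEuclideanCLM (𝕜 := ℝ) M‖ • (1 : Matrix (Fin m) (Fin m) ℝ)) - M).PosSemidef := by
  set c := ‖Matrix.toEuclideanCLM (𝕜 := ℝ) M‖ with hc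
  refine Matrix.PosSemidef.of_dotProduct_mulVec_nonneg ?_ fun x => ?_
  · show _ = _
    rw [conjTranspose_sub, conjTranspose_smul, hM.eq, conjTranspose_one]
    simp
  · set y : EuclideanSpace ℝ (Fin m) := WithLp.toLp 2 x with hy
    have hMy : Matrix.toEuclideanCLM (𝕜 := ℝ) M y = WithLp.toLp 2 (M *ᵥ x) := by
      rw [hy, Matrix.toEuclideanCLM_toLp]
    have hinner : x ⬝ᵥ (M *ᵥ x) = ⟪y, Matrix.toEuclideanCLM (𝕜 := ℝ) M y⟫ := by
      rw [EuclideanSpace.inner_eq_star_dotProduct, hMy]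
      simp [hy, dotProduct_comm]
    have hxx : x ⬝ᵥ x = ‖y‖ * ‖y‖ := by
      have : ⟪y, y⟫ = ‖y‖ * ‖y‖ := real_inner_self_eq_norm_mul_norm y
      rw [← this, EuclideanSpace.inner_eq_star_dotProduct]
      simp [hy]
    have hbound : ⟪y, Matrix.toEuclideanCLM (𝕜 := ℝ) M y⟫ ≤ c * (‖y‖ * ‖y‖) := by
      calc ⟪y, Matrix.toEuclideanCLM (𝕜 := ℝ) M y⟫
          ≤ ‖y‖ * ‖Matrix.toEuclideanCLM (𝕜 := ℝ) M y‖ := real_inner_le_norm _ _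
        _ ≤ ‖y‖ * (c * ‖y‖) := by
            refine mul_le_mul_of_nonneg_left ?_ (norm_nonneg _)
            exact (Matrix.toEuclideanCLM (𝕜 := ℝ) M).le_opNorm y
        _ = c * (‖y‖ * ‖y‖) := by ring
    have hstar : star x = x := by simp
    rw [hstar, sub_mulVec, dotProduct_sub, smul_mulVec, one_mulVec, dotProduct_smul]
    rw [hinner] at *
    rw [hxx]
    simp only [smul_eq_mul]
    linarith

private lemma det_le_pow_mul_det_aux {m : ℕ} (L0 c : ℝ) (hL0 : 0 < L0) (hc : 0 ≤ c)
    {p q : Matrix (Fin m) (Fin m) ℝ}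
    (hp0 : (p - L0 • (1 : Matrix (Fin m) (Fin m) ℝ)).PosSemidef) (hq : q.PosDef)
    (hqp : ((c • (1 : Matrix (Fin m) (Fin m) ℝ)) - (q - p)).PosSemidef) :
    q.det ≤ (1 + L0⁻¹ * c) ^ m * p.det := by
  set t : ℝ := 1 + L0⁻¹ * c with ht
  have h1 : (L0⁻¹ * c) • (p - L0 • (1 : Matrix (Fin m) (Fin m) ℝ)) =
      (L0⁻¹ * c) • p - c • (1 : Matrix (Fin m) (Fin m) ℝ) := by
    rw [smul_sub, smul_smul]
    congr 2
    field_simp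
  have h2 : t • p - q =
      ((c • (1 : Matrix (Fin m) (Fin m) ℝ)) - (q - p)) +
        (L0⁻¹ * c) • (p - L0 • (1 : Matrix (Fin m) (Fin m) ℝ)) := by
    rw [h1, ht]
    module
  have hpsd : (t • p - q).PosSemidef := h2 ▸ hqp.add (psd_smul_aux (by positivity) hp0)
  have := det_le_det_aux hq hpsd
  rwa [det_smul, Fintype.card_fin] at this

theorem stmt_10 (m : ℕ) (L0 L1 : ℝ) (hL0 : 0 < L0) (hL01 : L0 ≤ L1)
    (a b : Matrix (Fin m) (Fin m) ℝ) (has : a.IsSymm) (hbs : b.IsSymm)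
    (ha0 : (a - L0 • (1 : Matrix (Fin m) (Fin m) ℝ)).PosSemidef)
    (ha1 : (L1 • (1 : Matrix (Fin m) (Fin m) ℝ) - a).PosSemidef)
    (hb0 : (b - L0 • (1 : Matrix (Fin m) (Fin m) ℝ)).PosSemidef)
    (hb1 : (L1 • (1 : Matrix (Fin m) (Fin m) ℝ) - b).PosSemidef) :
    |b.det / a.det - 1| ≤
      (L0⁻¹ * m * ‖Matrix.toEuclideanCLM (𝕜 := ℝ) (a - b)‖) *
        Real.exp (L0⁻¹ * m * ‖Matrix.toEuclideanCLM (𝕜 := ℝ) (a - b)‖) := by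
  set c := ‖Matrix.toEuclideanCLM (𝕜 := ℝ) (a - b)‖ with hc
  have hc0 : 0 ≤ c := norm_nonneg _
  have hOne : (L0 • (1 : Matrix (Fin m) (Fin m) ℝ)).PosDef := by
    rw [smul_one_eq_diagonal]
    exact posDef_diagonal_iff.mpr fun _ => hL0
  have haPD : a.PosDef := by
    have := hOne.add_posSemidef ha0
    rwa [add_sub_cancel] at this
  have hbPD : b.PosDef := by
    have := hOne.add_posSemidef hb0
    rwa [add_sub_cancel] at this
  have habH : (a - b).IsHermitian := haPD.1.sub hbPD.1
  have hab : ((c • (1 : Matrix (Fin m) (Fin m) ℝ)) - (a - b)).PosSemidef := norm_psd_aux habH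
  have hba : ((c • (1 : Matrix (Fin m) (Fin m) ℝ)) - (b - a)).PosSemidef := by
    have h1 : ‖Matrix.toEuclideanCLM (𝕜 := ℝ) (b - a)‖ = c := by
      rw [hc, show b - a = -(a - b) by abel, map_neg, norm_neg]
    have h2 := norm_psd_aux (hbPD.1.sub haPD.1)
    rwa [h1] at h2
  set t : ℝ := 1 + L0⁻¹ * c with ht
  have hA0 : 0 < a.det := haPD.det_pos
  have hB0 : 0 < b.det := hbPD.det_pos
  have hdb : b.det ≤ t ^ m * a.det := det_le_pow_mul_det_aux L0 c hL0 hc0 ha0 hbPD hba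
  have hda : a.det ≤ t ^ m * b.det := det_le_pow_mul_det_aux L0 c hL0 hc0 hb0 haPD hab
  set th : ℝ := L0⁻¹ * (m : ℝ) * c with hth
  have hth0 : 0 ≤ th := by positivity
  set E : ℝ := Real.exp th with hE
  have hE0 : 0 < E := Real.exp_pos _
  have htE : t ^ m ≤ E := by
    have h1 : t ≤ Real.exp (L0⁻¹ * c) := by
      have := Real.add_one_le_exp (L0⁻¹ * c)
      linarith
    have h2 : t ^ m ≤ Real.exp (L0⁻¹ * c) ^ m := by
      apply pow_le_pow_left₀ (by positivity) h1
    have h3 : Real.exp (L0⁻¹ * c) ^ m = E := by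
      rw [hE, ← Real.exp_nat_mul]
      congr 1
      ring
    rwa [h3] at h2
  have hdb' : b.det ≤ E * a.det := le_trans hdb (by nlinarith)
  have hda' : a.det ≤ E * b.det := le_trans hda (by nlinarith)
  have hinv : (1 - th) * E ≤ 1 := by
    have h1 := Real.add_one_le_exp (-th)
    have h2 : Real.exp (-th) * E = 1 := by
      rw [hE, ← Real.exp_add]
      simp
    nlinarith
  rw [abs_le]
  constructor
  · have hlow : (1 - th) * a.det ≤ b.det := by
      rcases le_or_gt (1 - th) 0 with h | h
      · nlinarith
      · nlinarith
    have h5 : (1 - th) ≤ b.det / a.det := by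
      rw [le_div_iff₀ hA0]; exact hlow
    have h7 := Real.add_one_le_exp th
    rw [← hE] at h7
    have h6 : th ≤ th * E := by nlinarith
    linarith
  · have hup : b.det / a.det ≤ E := by
      rw [div_le_iff₀ hA0]
      nlinarith
    nlinarith
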